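/- There exists β ∈ ℤ₅ with β³ - 29β² + 4β - 1 = 0 and β ≡ 1 (mod 25); moreover β is a unit of ℤ₅ and is a fifth power in ℤ₅, i.e., there exists y ∈ ℤ₅ with y⁵ = β. -/

import Mathlib

instance : Fact (Nat.Prime 5) := ⟨by norm_num⟩

open Polynomial

lemma norm5 : ‖(5 : ℤ_[5])‖ = (5:ℝ)⁻¹ := by
  have : ((5:ℕ) : ℤ_[5]) = (5 : ℤ_[5]) := by norm_num
  rw [← this, PadicInt.norm_p]; norm_num

lemma norm25 : ‖(25 : ℤ_[5])‖ = (5:ℝ)⁻¹ ^ 2 := by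
  have : (25 : ℤ_[5]) = (5:ℤ_[5])^2 := by norm_num
  rw [this, norm_pow, norm5]

lemma norm125 : ‖(125 : ℤ_[5])‖ = (5:ℝ)⁻¹ ^ 3 := by
  have : (125 : ℤ_[5]) = (5:ℤ_[5])^3 := by norm_num
  rw [this, norm_pow, norm5]

lemma norm51 : ‖(51 : ℤ_[5])‖ = 1 := by
  refine le_antisymm (PadicInt.norm_le_one _) (not_lt.1 fun h => ?_)
  have h2 : ‖((51:ℤ) : ℤ_[5])‖ < 1 := by push_cast; exact h
  rw [PadicInt.norm_int_lt_one_iff_dvd] at h2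
  omega

lemma norm_one_add (u : ℤ_[5]) : ‖1 + 5 * u‖ = 1 := by
  have h5u : ‖5 * (u:ℤ_[5])‖ < 1 := by
    rw [norm_mul, norm5]
    calc (5:ℝ)⁻¹ * ‖u‖ ≤ (5:ℝ)⁻¹ * 1 := by
          gcongr; exact PadicInt.norm_le_one u
      _ < 1 := by norm_num
  refine le_antisymm (PadicInt.norm_le_one _) ?_
  have key := PadicInt.nonarchimedean (1 + 5*u) (-(5*u))
  rw [show (1 + 5*u) + -(5*u) = (1:ℤ_[5]) from by ring, norm_neg, norm_one] at key
  rcases max_cases ‖1 + 5*u‖ ‖5*u‖ with ⟨h, _⟩ | ⟨h, _⟩ <;> rw [h] at key <;> linarith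

theorem stmt_19 :
    ∃ β : ℤ_[5], β ^ 3 - 29 * β ^ 2 + 4 * β - 1 = 0 ∧ (25 : ℤ_[5]) ∣ (β - 1) ∧
      IsUnit β ∧ ∃ y : ℤ_[5], y ^ 5 = β := by
  -- Step 1: Hensel's lemma on F = X^3 - 29 X^2 + 4 X - 1 at a = 1
  set F : Polynomial ℤ_[5] := X^3 - 29 * X^2 + 4 * X - 1 with hF
  have hFeval : ∀ z : ℤ_[5], F.eval z = z^3 - 29*z^2 + 4*z - 1 := by
    intro z; simp [hF]
  have hFder : F.derivative = 3 * X^2 - 58 * X + 4 := by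
    simp [hF, map_ofNat]; ring
  have hFd1 : F.derivative.eval 1 = -51 := by rw [hFder]; simp; norm_num
  have hF1 : F.eval 1 = -25 := by rw [hFeval]; norm_num
  have hnorm : ‖F.eval 1‖ < ‖F.derivative.eval 1‖ ^ 2 := by
    rw [hF1, hFd1, norm_neg, norm_neg, norm25, norm51]
    norm_num
  obtain ⟨β, hβ0, hβdist, -, -⟩ := hensels_lemma hnorm
  have hroot : β^3 - 29*β^2 + 4*β - 1 = 0 := by rw [← hFeval]; exact hβ0
  -- 5 ∣ β - 1
  have h5dvd : (5 : ℤ_[5]) ∣ (β - 1) := by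
    have hc : ((5:ℕ) : ℤ_[5]) = 5 := by norm_num
    rw [← hc, ← PadicInt.norm_lt_one_iff_dvd]
    rw [Polynomial.coe_aeval_eq_eval, hFd1, norm_neg, norm51] at hβdist
    exact hβdist
  obtain ⟨e, he⟩ := h5dvd
  have hβe : β = 1 + 5*e := by linear_combination he
  rw [hβe] at hroot
  -- 5 ∣ e
  have h5ne : (5:ℤ_[5]) ≠ 0 := by
    intro h; have := congrArg (‖·‖) h; simp [norm5] at this
  have key : (51 : ℤ_[5]) * e = 5 * (5*e^3 - 26*e^2 - 1) := by
    have h : (5:ℤ_[5]) * ((51:ℤ_[5]) * e - 5 * (5*e^3 - 26*e^2 - 1)) = 0 := by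
      linear_combination -hroot
    rcases mul_eq_zero.1 h with h | h
    · exact absurd h h5ne
    · linear_combination h
  have h5e : (5:ℤ_[5]) ∣ e := by
    have h51 : IsUnit (51 : ℤ_[5]) := PadicInt.isUnit_iff.2 norm51
    exact (h51.dvd_mul_left).1 ⟨_, key⟩
  obtain ⟨u, hu⟩ := h5e
  have hβu : β = 1 + 25 * u := by rw [hβe, hu]; ring
  have h25dvd : (25 : ℤ_[5]) ∣ (β - 1) := ⟨u, by rw [hβu]; ring⟩
  -- IsUnit β
  have hrootβ : β^3 - 29*β^2 + 4*β - 1 = 0 := by rw [hβe]; exact hroot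
  have hunit : IsUnit β := IsUnit.of_mul_eq_one (β^2 - 29*β + 4) (by linear_combination hrootβ)
  -- Step 2: fifth power via Hensel on G = X^5 - C β at a = 1 + 5u
  set G : Polynomial ℤ_[5] := X^5 - C β with hG
  have hGeval : ∀ z : ℤ_[5], G.eval z = z^5 - β := by intro z; simp [hG]
  have hGder : G.derivative = 5 * X^4 := by
    simp only [hG, derivative_sub, derivative_C, derivative_X_pow, sub_zero]
    norm_num [Polynomial.C_eq_natCast, map_ofNat]
  have hGda : G.derivative.eval (1 + 5*u) = 5 * (1+5*u)^4 := by rw [hGder]; simp [map_ofNat]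
  have hGa : G.eval (1 + 5*u) = 125 * (2*u^2 + 10*u^3 + 25*u^4 + 25*u^5) := by
    rw [hGeval, hβu]; ring
  have hnorm2 : ‖G.eval (1 + 5*u)‖ < ‖G.derivative.eval (1 + 5*u)‖ ^ 2 := by
    rw [hGa, hGda, norm_mul, norm_mul, norm125, norm5, norm_pow, norm_one_add]
    have := PadicInt.norm_le_one (2*u^2 + 10*u^3 + 25*u^4 + 25*u^5)
    nlinarith [norm_nonneg (2*u^2 + 10*u^3 + 25*u^4 + 25*u^5)]
  obtain ⟨y, hy0, -, -, -⟩ := hensels_lemma hnorm2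
  refine ⟨β, hrootβ, h25dvd, hunit, y, ?_⟩
  have := hGeval y
  rw [Polynomial.coe_aeval_eq_eval] at hy0
  rw [hy0] at this
  linear_combination -this
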